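/- arXiv:1907.06576 — 5 statements merged into one kernel-verified Lean document; each statement's English description precedes it below -/
import Mathlib

section
/- For every finite tree T on n vertices (rooted, edges directed away from the root) and every natural number p with 1 ≤ p ≤ n, there exists a subtree T' of T rooted at some vertex such that p/2 ≤ |V(T')| ≤ p and removing the edges of T' from T (and then all isolated vertices) leaves a single connected tree. -/
open SimpleGraph Set

namespace EligibleAux

variable {V : Type*} {G : SimpleGraph V}

/-- Reachability via a walk whose support stays inside `A`. -/
def RW (G : SimpleGraph V) (A : Set V) (x y : V) : Prop :=
  ∃ w : G.Walk x y, ∀ z ∈ w.support, z ∈ A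

lemma RW.mem_left {A : Set V} {x y : V} (h : RW G A x y) : x ∈ A := by
  obtain ⟨w, hw⟩ := h; exact hw x w.start_mem_support

lemma RW.mem_right {A : Set V} {x y : V} (h : RW G A x y) : y ∈ A := by
  obtain ⟨w, hw⟩ := h; exact hw y w.end_mem_support

lemma RW.refl {A : Set V} {x : V} (hx : x ∈ A) : RW G A x x :=
  ⟨Walk.nil, by simp [hx]⟩

lemma RW.symm {A : Set V} {x y : V} (h : RW G A x y) : RW G A y x := by
  obtain ⟨w, hw⟩ := h
  exact ⟨w.reverse, by intro z hz; rw [Walk.support_reverse, List.mem_reverse] at hz; exact hw z hz⟩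

lemma RW.trans {A : Set V} {x y z : V} (h1 : RW G A x y) (h2 : RW G A y z) : RW G A x z := by
  obtain ⟨w1, hw1⟩ := h1
  obtain ⟨w2, hw2⟩ := h2
  refine ⟨w1.append w2, ?_⟩
  intro t ht
  rcases (Walk.mem_support_append_iff _ _).mp ht with h | h
  · exact hw1 t h
  · exact hw2 t h

lemma RW.adj {A : Set V} {x y : V} (hx : x ∈ A) (hy : y ∈ A) (h : G.Adj x y) : RW G A x y :=
  ⟨Walk.cons h Walk.nil, by intro z hz; simp at hz; rcases hz with rfl | rfl <;> assumption⟩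

/-- The connected component of `x` within `A`. -/
def compS (G : SimpleGraph V) (A : Set V) (x : V) : Set V := {y | RW G A x y}

lemma mem_compS {A : Set V} {x y : V} : y ∈ compS G A x ↔ RW G A x y := Iff.rfl

lemma mem_comp_self {A : Set V} {x : V} (hx : x ∈ A) : x ∈ compS G A x := RW.refl hx

lemma comp_subset {A : Set V} {x : V} : compS G A x ⊆ A := fun _ h => h.mem_right

lemma comp_eq {A : Set V} {x y : V} (h : RW G A x y) : compS G A x = compS G A y := by
  ext z
  exact ⟨fun hz => h.symm.trans hz, fun hz => h.trans hz⟩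

lemma comp_eq_of_mem {A : Set V} {x y : V} (h : y ∈ compS G A x) :
    compS G A y = compS G A x := (comp_eq h).symm

/-- Extract a walk in `G` with support in `T` from connectivity of the induced graph. -/
lemma exists_walk_of_induce_connected {T : Set V} (h : (G.induce T).Connected)
    {x y : V} (hx : x ∈ T) (hy : y ∈ T) : ∃ w : G.Walk x y, ∀ z ∈ w.support, z ∈ T := by
  obtain ⟨w⟩ := h ⟨x, hx⟩ ⟨y, hy⟩
  refine ⟨w.map (SimpleGraph.Embedding.induce T).toHom, ?_⟩
  intro z hz
  replace hz : z ∈ (w.map (SimpleGraph.Embedding.induce T).toHom).support := hz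
  rw [Walk.support_map, List.mem_map] at hz
  obtain ⟨⟨z', hz'⟩, _, rfl⟩ := hz
  exact hz'

/-- Induced connectivity from walks emanating from a single vertex. -/
lemma induce_connected_of_walks {s : Set V} {u : V} (hu : u ∈ s)
    (h : ∀ y ∈ s, ∃ w : G.Walk u y, ∀ z ∈ w.support, z ∈ s) : (G.induce s).Connected := by
  apply G.induce_connected_of_patches u hu
  intro v hv
  obtain ⟨w, hw⟩ := h v hv
  exact ⟨{z | z ∈ w.support}, hw, w.start_mem_support, w.end_mem_support,
    w.connected_induce_support.preconnected _ _⟩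

lemma induce_singleton_connected (v : V) : (G.induce {v}).Connected := by
  apply induce_connected_of_walks (s := {v}) (u := v) rfl
  rintro y rfl
  exact ⟨Walk.nil, by simp⟩

/-- Any `RW`-witness can be replaced by a walk staying in the component. -/
lemma rw_walk_in_comp {A : Set V} {x y : V} (h : RW G A x y) :
    ∃ w : G.Walk x y, ∀ z ∈ w.support, z ∈ compS G A x := by
  classical
  obtain ⟨w, hw⟩ := h
  refine ⟨w, fun z hz => ?_⟩
  exact ⟨w.takeUntil z hz, fun t ht => hw t (w.support_takeUntil_subset hz ht)⟩

lemma induce_comp_connected {A : Set V} {x : V} (hx : x ∈ A) :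
    (G.induce (compS G A x)).Connected := by
  apply induce_connected_of_walks (mem_comp_self hx)
  intro y hy
  exact rw_walk_in_comp hy

/-- From a walk from `a` to `x ∈ T \ {u₀}` inside `T`, either `a` is connected to `x` within
`T \ {u₀}`, or some neighbor of `u₀` is. -/
lemma exists_adj_comp {T : Set V} {u₀ : V} :
    ∀ {a x : V} (w : G.Walk a x), (∀ z ∈ w.support, z ∈ T) → x ∈ T \ {u₀} →
      RW G (T \ {u₀}) a x ∨ ∃ b, G.Adj u₀ b ∧ RW G (T \ {u₀}) b x := by
  intro a x w
  induction w with
  | nil =>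
    intro _ hx
    exact Or.inl (RW.refl hx)
  | @cons a c x h w' ih =>
    intro hw hx
    have hsub : ∀ z ∈ w'.support, z ∈ T := by
      intro z hz; exact hw z (by rw [Walk.support_cons]; exact List.mem_cons_of_mem _ hz)
    rcases ih hsub hx with hcx | hb
    · by_cases ha : a = u₀
      · subst ha
        exact Or.inr ⟨c, h, hcx⟩
      · have ha' : a ∈ T \ {u₀} := ⟨hw a (Walk.start_mem_support _), ha⟩
        exact Or.inl ((RW.adj ha' hcx.mem_left h).trans hcx)
    · exact Or.inr hb

/-- A walk from `u₀` to a vertex outside `compS G (T \ {u₀}) x` can be rerouted to avoid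
that component entirely. -/
lemma exists_walk_avoiding {T : Set V} {u₀ x : V} (hx : x ∈ T \ {u₀}) :
    ∀ (L : ℕ) {y : V} (w : G.Walk u₀ y), w.length ≤ L → (∀ z ∈ w.support, z ∈ T) →
      y ∉ compS G (T \ {u₀}) x →
      ∃ w' : G.Walk u₀ y, ∀ z ∈ w'.support, z ∈ T \ compS G (T \ {u₀}) x := by
  classical
  have hu₀comp : u₀ ∉ compS G (T \ {u₀}) x := fun h => (comp_subset h).2 rfl
  intro L
  induction L with
  | zero =>
    intro y w hlen hw _
    cases w with
    | nil =>
      refine ⟨Walk.nil, ?_⟩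
      intro z hz
      simp only [Walk.support_nil, List.mem_singleton] at hz
      subst hz
      exact ⟨hw _ (Walk.start_mem_support _), hu₀comp⟩
    | cons h w' => simp [Walk.length_cons] at hlen
  | succ L ih =>
    intro y w hlen hw hy
    cases w with
    | nil =>
      refine ⟨Walk.nil, ?_⟩
      intro z hz
      simp only [Walk.support_nil, List.mem_singleton] at hz
      subst hz
      exact ⟨hw _ (Walk.start_mem_support _), hu₀comp⟩
    | @cons _ c _ h w₁ =>
      have hw₁ : ∀ z ∈ w₁.support, z ∈ T := by
        intro z hz; exact hw z (by rw [Walk.support_cons]; exact List.mem_cons_of_mem _ hz)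
      by_cases hmem : u₀ ∈ w₁.support
      · refine ih (w₁.dropUntil u₀ hmem) ?_ ?_ hy
        · have h1 := w₁.length_dropUntil_le hmem
          have h2 : w₁.length + 1 ≤ L + 1 := by simpa [Walk.length_cons] using hlen
          omega
        · intro z hz; exact hw₁ z (w₁.support_dropUntil_subset hmem hz)
      · have hsub : ∀ z ∈ w₁.support, z ∈ T \ {u₀} := by
          intro z hz
          exact ⟨hw₁ z hz, fun e => hmem (e ▸ hz)⟩
        refine ⟨Walk.cons h w₁, ?_⟩
        intro z hz
        rw [Walk.support_cons, List.mem_cons] at hz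
        rcases hz with rfl | hz'
        · exact ⟨hw _ (Walk.start_mem_support _), hu₀comp⟩
        · refine ⟨hw₁ z hz', fun hzc => hy ?_⟩
          have hcz : RW G (T \ {u₀}) c z :=
            ⟨w₁.takeUntil z hz', fun t ht => hsub t (w₁.support_takeUntil_subset hz' ht)⟩
          have hcy : RW G (T \ {u₀}) c y := ⟨w₁, hsub⟩
          exact (mem_compS.mp hzc).trans (hcz.symm.trans hcy)

/-- Removing a component of `T \ {u₀}` from `T` keeps it connected. -/
lemma induce_diff_comp_connected {T : Set V} {u₀ x : V}
    (hconn : (G.induce T).Connected) (hu₀ : u₀ ∈ T) (hx : x ∈ T \ {u₀}) :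
    (G.induce (T \ compS G (T \ {u₀}) x)).Connected := by
  have hu₀comp : u₀ ∉ compS G (T \ {u₀}) x := fun h => (comp_subset h).2 rfl
  apply induce_connected_of_walks (s := T \ compS G (T \ {u₀}) x) (u := u₀) ⟨hu₀, hu₀comp⟩
  intro y hy
  obtain ⟨w, hw⟩ := exists_walk_of_induce_connected hconn hu₀ hy.1
  exact exists_walk_avoiding hx w.length w le_rfl hw hy.2

/-- Greedy subfamily selection. -/
lemma greedy {ι : Type*} [DecidableEq ι] (A B : ℕ) :
    ∀ (s : Finset ι) (f : ι → ℕ), (∀ i ∈ s, A + f i ≤ B + 1) → A ≤ ∑ i ∈ s, f i →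
      ∃ t ⊆ s, A ≤ ∑ i ∈ t, f i ∧ ∑ i ∈ t, f i ≤ B := by
  intro s
  induction s using Finset.induction with
  | empty =>
    intro f _ h
    simp only [Finset.sum_empty] at h
    exact ⟨∅, Finset.Subset.refl _, by simpa using h, by simp⟩
  | @insert a s ha ih =>
    intro f hf htot
    by_cases hA : A ≤ ∑ i ∈ s, f i
    · obtain ⟨t, hts, h1, h2⟩ := ih f (fun i hi => hf i (Finset.mem_insert_of_mem hi)) hA
      exact ⟨t, hts.trans (Finset.subset_insert _ _), h1, h2⟩
    · refine ⟨insert a s, Finset.Subset.refl _, htot, ?_⟩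
      rw [Finset.sum_insert ha] at htot ⊢
      have h1 := hf a (Finset.mem_insert_self _ _)
      omega

lemma ncard_sUnion_le [Fintype V] :
    ∀ (F : Finset (Set V)), (⋃₀ (↑F : Set (Set V))).ncard ≤ ∑ C ∈ F, C.ncard := by
  classical
  intro F
  induction F using Finset.induction with
  | empty => simp
  | @insert C F hC ih =>
    rw [Finset.coe_insert, Set.sUnion_insert, Finset.sum_insert hC]
    exact (Set.ncard_union_le _ _).trans (by omega)

lemma ncard_sUnion_eq [Fintype V] :
    ∀ (F : Finset (Set V)), (∀ C ∈ F, ∀ D ∈ F, C ≠ D → Disjoint C D) →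
      (⋃₀ (↑F : Set (Set V))).ncard = ∑ C ∈ F, C.ncard := by
  classical
  intro F
  induction F using Finset.induction with
  | empty => simp
  | @insert C F hC ih =>
    intro hdisj
    rw [Finset.coe_insert, Set.sUnion_insert, Finset.sum_insert hC]
    have hd : Disjoint C (⋃₀ ↑F) := by
      rw [Set.disjoint_sUnion_right]
      intro D hD
      exact hdisj C (Finset.mem_insert_self _ _) D (Finset.mem_insert_of_mem hD)
        (fun e => hC (e ▸ hD))
    rw [Set.ncard_union_eq hd (Set.toFinite _) (Set.toFinite _),
      ih (fun C hCF D hDF => hdisj C (Finset.mem_insert_of_mem hCF) D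
        (Finset.mem_insert_of_mem hDF))]

/-- Main auxiliary lemma, by strong induction on the size of the connected set `T`. -/
lemma aux {V : Type*} [Fintype V] (G : SimpleGraph V) :
    ∀ (n : ℕ) (T : Set V), T.ncard ≤ n → (G.induce T).Connected →
    ∀ (p : ℕ), 1 ≤ p → p ≤ T.ncard → ∀ u₀ ∈ T,
    ∃ S : Set V, S ⊆ T ∧ ∃ r, r ∈ S ∧ (G.induce S).Connected ∧
      (G.induce ((T \ S) ∪ {r})).Connected ∧ p ≤ 2 * S.ncard ∧ S.ncard ≤ p ∧
      (u₀ ∈ S → u₀ = r) := by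
  classical
  intro n
  induction n with
  | zero =>
    intro T hT _ p hp1 hpT _ _
    omega
  | succ n ih =>
    intro T hTn hconn p hp1 hpT u₀ hu₀
    by_cases hpn : T.ncard ≤ p
    · -- S = T
      refine ⟨T, subset_rfl, u₀, hu₀, hconn, ?_, by omega, by omega, fun _ => rfl⟩
      rw [Set.diff_self, Set.empty_union]
      exact induce_singleton_connected u₀
    · have hplt : p < T.ncard := by omega
      set T' := T \ {u₀} with hT'def
      have hT'card : T'.ncard = T.ncard - 1 := Set.ncard_diff_singleton_of_mem hu₀
      have hu₀T' : u₀ ∉ T' := fun h => h.2 rfl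
      have hcompsub : ∀ x : V, compS G T' x ⊆ T :=
        fun x => comp_subset.trans Set.diff_subset
      have hu₀comp : ∀ x : V, u₀ ∉ compS G T' x := fun x h => (comp_subset h).2 rfl
      have hadj : ∀ y ∈ T', ∃ b, G.Adj u₀ b ∧ RW G T' b y := by
        intro y hy
        obtain ⟨w, hw⟩ := exists_walk_of_induce_connected hconn hu₀ hy.1
        rcases exists_adj_comp w hw hy with h | h
        · exact absurd h.mem_left hu₀T'
        · exact h
      by_cases hbig : ∃ x ∈ T', p ≤ (compS G T' x).ncard
      · -- recurse into a big component
        obtain ⟨x, hx, hcard⟩ := hbig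
        obtain ⟨b, hb, hrb⟩ := hadj x hx
        have hbx : b ∈ compS G T' x := (comp_eq hrb.symm) ▸ mem_comp_self hrb.mem_left
        have hnle : (compS G T' x).ncard ≤ n := by
          have h1 : (compS G T' x).ncard ≤ T'.ncard :=
            Set.ncard_le_ncard comp_subset (Set.toFinite _)
          omega
        obtain ⟨S, hST, r, hr, hSconn, hcomplconn, hle1, hle2, hbr⟩ :=
          ih (compS G T' x) hnle (induce_comp_connected hx) p hp1 hcard b hbx
        refine ⟨S, hST.trans (hcompsub x), r, hr, hSconn, ?_, hle1, hle2, ?_⟩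
        · have hset : (T \ S) ∪ {r} =
              (T \ compS G T' x) ∪ ((compS G T' x \ S) ∪ {r}) := by
            ext z
            constructor
            · rintro (⟨hzT, hzS⟩ | rfl)
              · by_cases hzc : z ∈ compS G T' x
                · exact Or.inr (Or.inl ⟨hzc, hzS⟩)
                · exact Or.inl ⟨hzT, hzc⟩
              · exact Or.inr (Or.inr rfl)
            · rintro (⟨hzT, hzc⟩ | ⟨hzc, hzS⟩ | rfl)
              · exact Or.inl ⟨hzT, fun h => hzc (hST h)⟩
              · exact Or.inl ⟨hcompsub x hzc, hzS⟩
              · exact Or.inr rfl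
          rw [hset]
          refine connected_induce_union
            (induce_diff_comp_connected hconn hu₀ hx).preconnected hcomplconn.preconnected
            ⟨hu₀, hu₀comp x⟩ ?_ hb
          by_cases hbS : b ∈ S
          · exact Or.inr (hbr hbS ▸ rfl)
          · exact Or.inl ⟨hbx, hbS⟩
        · intro hu
          exact absurd (hST hu) (hu₀comp x)
      · -- all components small; pick a union of components
        push_neg at hbig
        set F : Finset (Set V) :=
          (Set.toFinite T').toFinset.image (fun x => compS G T' x) with hFdef
        have hmemF : ∀ C ∈ F, ∃ x ∈ T', C = compS G T' x := by
          intro C hC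
          rw [hFdef, Finset.mem_image] at hC
          obtain ⟨x, hx, rfl⟩ := hC
          exact ⟨x, (Set.Finite.mem_toFinset _).mp hx, rfl⟩
        have hdisjF : ∀ C ∈ F, ∀ D ∈ F, C ≠ D → Disjoint C D := by
          intro C hC D hD hne
          obtain ⟨xc, _, rfl⟩ := hmemF C hC
          obtain ⟨xd, _, rfl⟩ := hmemF D hD
          rw [Set.disjoint_left]
          intro z hzC hzD
          exact hne ((comp_eq (mem_compS.mp hzC)).trans (comp_eq (mem_compS.mp hzD)).symm)
        have hcover : T' ⊆ ⋃₀ ↑F := by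
          intro y hy
          refine ⟨compS G T' y, ?_, mem_comp_self hy⟩
          rw [hFdef]
          exact Finset.mem_coe.mpr (Finset.mem_image_of_mem _ ((Set.Finite.mem_toFinset _).mpr hy))
        have hsmall : ∀ C ∈ F, C.ncard < p := by
          intro C hC
          obtain ⟨x, hx, rfl⟩ := hmemF C hC
          exact hbig x hx
        set q := (p + 1) / 2 with hqdef
        have hsub : ∃ F' ⊆ F, q - 1 ≤ ∑ C ∈ F', C.ncard ∧ ∑ C ∈ F', C.ncard ≤ p - 1 := by
          by_cases hone : ∃ x ∈ T', q - 1 ≤ (compS G T' x).ncard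
          · obtain ⟨x, hx, h1⟩ := hone
            have hmem : compS G T' x ∈ F := by
              rw [hFdef]
              exact Finset.mem_image_of_mem _ ((Set.Finite.mem_toFinset _).mpr hx)
            refine ⟨{compS G T' x}, Finset.singleton_subset_iff.mpr hmem, ?_, ?_⟩
            · simpa using h1
            · have h2 := hbig x hx
              simp only [Finset.sum_singleton]
              omega
          · push_neg at hone
            refine greedy (q - 1) (p - 1) F _ ?_ ?_
            · intro C hC
              obtain ⟨x, hx, rfl⟩ := hmemF C hC
              have h1 := hone x hx
              omega
            · have h1 : T'.ncard ≤ ∑ C ∈ F, C.ncard :=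
                (Set.ncard_le_ncard hcover (Set.toFinite _)).trans (ncard_sUnion_le F)
              omega
        obtain ⟨F', hF'F, hsum1, hsum2⟩ := hsub
        set U := ⋃₀ (↑F' : Set (Set V)) with hUdef
        have hUsub : U ⊆ T' := by
          intro z hz
          obtain ⟨C, hC, hzC⟩ := hz
          obtain ⟨x, hx, rfl⟩ := hmemF C (hF'F hC)
          exact comp_subset hzC
        have hu₀U : u₀ ∉ U := fun h => hu₀T' (hUsub h)
        have hUcomp : ∀ y ∈ U, compS G T' y ⊆ U := by
          intro y hy
          obtain ⟨C, hC, hyC⟩ := hy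
          obtain ⟨x, hx, rfl⟩ := hmemF C (hF'F hC)
          rw [comp_eq_of_mem hyC]
          exact fun z hz => ⟨_, hC, hz⟩
        have hUncard : U.ncard = ∑ C ∈ F', C.ncard :=
          ncard_sUnion_eq F' (fun C hC D hD => hdisjF C (hF'F hC) D (hF'F hD))
        have hSncard : (U ∪ {u₀}).ncard = U.ncard + 1 := by
          rw [Set.union_singleton, Set.ncard_insert_of_notMem hu₀U (Set.toFinite _)]
        have hconnW : ∀ W ⊆ T', (∀ y ∈ W, compS G T' y ⊆ W) →
            (G.induce (W ∪ {u₀})).Connected := by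
          intro W hWT' hWcomp
          apply induce_connected_of_walks (u := u₀) (Or.inr rfl)
          intro y hy
          rcases hy with hyW | rfl
          · obtain ⟨b, hb, hrb⟩ := hadj y (hWT' hyW)
            obtain ⟨w, hw⟩ := rw_walk_in_comp hrb
            refine ⟨Walk.cons hb w, ?_⟩
            intro z hz
            rw [Walk.support_cons, List.mem_cons] at hz
            rcases hz with rfl | hz'
            · exact Or.inr rfl
            · have h1 : z ∈ compS G T' b := hw z hz'
              have hby : compS G T' b = compS G T' y := comp_eq hrb
              exact Or.inl (hWcomp y hyW (hby ▸ h1))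
          · exact ⟨Walk.nil, by simp⟩
        refine ⟨U ∪ {u₀}, ?_, u₀, Or.inr rfl, ?_, ?_, ?_, ?_, fun _ => rfl⟩
        · exact Set.union_subset (hUsub.trans Set.diff_subset) (by simpa using hu₀)
        · exact hconnW U hUsub hUcomp
        · have hset : (T \ (U ∪ {u₀})) ∪ {u₀} = (T' \ U) ∪ {u₀} := by
            ext z
            simp only [hT'def, Set.mem_union, Set.mem_diff, Set.mem_singleton_iff]
            tauto
          rw [hset]
          refine hconnW (T' \ U) Set.diff_subset ?_
          intro y hy z hz
          refine ⟨comp_subset hz, fun hzU => ?_⟩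
          have h1 : compS G T' z ⊆ U := hUcomp z hzU
          have h2 : y ∈ compS G T' z := by
            rw [comp_eq_of_mem hz]
            exact mem_comp_self hy.1
          exact hy.2 (h1 h2)
        · omega
        · omega

end EligibleAux


/-- Eligible subtree lemma: any finite tree `G` on `n` vertices and any `1 ≤ p ≤ n`
admits a rooted subtree `S` with `p/2 ≤ |S| ≤ p` whose removal (keeping the root `r`)
leaves a single connected tree. -/
theorem stmt_0 {V : Type*} [Fintype V] (G : SimpleGraph V) (hT : G.IsTree)
    (p : ℕ) (hp1 : 1 ≤ p) (hpn : p ≤ Fintype.card V) :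
    ∃ (S : Set V) (r : V), r ∈ S ∧ (G.induce S).Connected ∧
      (G.induce (Sᶜ ∪ {r})).Connected ∧
      p ≤ 2 * S.ncard ∧ S.ncard ≤ p := by
  classical
  have huniv : (G.induce (Set.univ : Set V)).Connected :=
    (SimpleGraph.induceUnivIso G).connected_iff.mpr hT.isConnected
  have hcard : p ≤ (Set.univ : Set V).ncard := by
    rw [Set.ncard_univ, Nat.card_eq_fintype_card]
    exact hpn
  have hne : Nonempty V := Fintype.card_pos_iff.mp (by omega)
  obtain ⟨u₀⟩ := hne
  obtain ⟨S, hST, r, hr, h1, h2, h3, h4, _⟩ :=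
    EligibleAux.aux G (Set.univ : Set V).ncard Set.univ le_rfl huniv p hp1 hcard u₀
      (Set.mem_univ u₀)
  refine ⟨S, r, hr, h1, ?_, h3, h4⟩
  rwa [Set.compl_eq_univ_diff]
end

section
/- Let OPT ≥ 0 and k ≥ 1, and let (g_i) be a sequence of reals with g_0 = 0 satisfying g_{i+1} − g_i ≥ (OPT − g_i)/k for all i ≥ 0. Then for every i, g_i ≥ (1 − (1 − 1/k)^i)·OPT. -/
theorem stmt_2 (OPT : ℝ) (hOPT : 0 ≤ OPT) (k : ℕ) (hk : 1 ≤ k)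
    (g : ℕ → ℝ) (hg0 : g 0 = 0)
    (hrec : ∀ i : ℕ, g (i + 1) - g i ≥ (OPT - g i) / k) :
    ∀ i : ℕ, g i ≥ (1 - (1 - 1 / (k : ℝ)) ^ i) * OPT := by
  have hk' : (1 : ℝ) ≤ (k : ℝ) := by exact_mod_cast hk
  have hkpos : (0 : ℝ) < k := lt_of_lt_of_le one_pos hk'
  have hr0 : (0 : ℝ) ≤ 1 - 1 / k := by
    have : 1 / (k : ℝ) ≤ 1 := by
      rw [div_le_one hkpos]; exact hk'
    linarith
  intro i
  induction i with
  | zero => simp [hg0]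
  | succ n ih =>
    have h := hrec n
    have key : g (n + 1) ≥ (1 - 1 / k) * g n + OPT / k := by
      have : g (n + 1) ≥ g n + (OPT - g n) / k := by linarith
      calc g (n + 1) ≥ g n + (OPT - g n) / k := this
        _ = (1 - 1 / k) * g n + OPT / k := by field_simp; ring
    have hmul : (1 - 1 / (k : ℝ)) * g n ≥ (1 - 1 / k) * ((1 - (1 - 1 / (k : ℝ)) ^ n) * OPT) :=
      mul_le_mul_of_nonneg_left ih hr0
    have : g (n + 1) ≥ (1 - 1 / k) * ((1 - (1 - 1 / (k : ℝ)) ^ n) * OPT) + OPT / k := by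
      linarith
    calc g (n + 1) ≥ (1 - 1 / k) * ((1 - (1 - 1 / (k : ℝ)) ^ n) * OPT) + OPT / k := this
      _ = (1 - (1 - 1 / (k : ℝ)) ^ (n + 1)) * OPT := by
        have hkne : (k : ℝ) ≠ 0 := ne_of_gt hkpos
        ring
end

section
/- In the graph G constructed from a set system S = {S_1,…,S_m} over elements {x_1,…,x_n} by taking a clique on vertices s_1,…,s_m, q copies x_{j,1},…,x_{j,q} of each element x_j, and edges (s_i, x_{j,z}) whenever x_j ∈ S_i: if some k sets of S cover at least λ elements, then there exists a connected set C of at most k vertices of G with |N[C]| ≥ m + qλ. -/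
/-- The closed neighborhood `N[S]` of a set of vertices. -/
def closedNbhd {V : Type*} (G : SimpleGraph V) (S : Set V) : Set V :=
  {u | ∃ v ∈ S, u = v ∨ G.Adj v u}

/-- The graph of the BCDS gap reduction: a clique on set-vertices `s_1, …, s_m`,
`q` copies of each of the `n` elements, and copy `x_{j,z}` adjacent to `s_i`
exactly when `x_j ∈ S_i`. -/
def MCGraph (m n q : ℕ) (Sets : Fin m → Finset (Fin n)) :
    SimpleGraph (Sum (Fin m) (Fin n × Fin q)) where
  Adj a b := match a, b with
    | .inl i, .inl j => i ≠ j
    | .inl i, .inr x => x.1 ∈ Sets i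
    | .inr x, .inl i => x.1 ∈ Sets i
    | .inr _, .inr _ => False
  symm := ⟨by rintro (i | x) (j | y) h <;> simp_all <;> first | exact fun h2 => h h2.symm | exact Ne.symm h | tauto⟩
  loopless := ⟨by rintro (i | x) h <;> simp_all⟩

/-- If some `k` sets of the system cover at least `λ` elements, then the reduction
graph has a connected set `C` of at most `k` vertices dominating at least `m + qλ`
vertices. -/
theorem stmt_13 (m n q k lam : ℕ) (hm : 1 ≤ m) (hq : 1 ≤ q) (hk : 1 ≤ k) (hl : 1 ≤ lam)
    (Sets : Fin m → Finset (Fin n))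
    (K : Finset (Fin m)) (hK : K.card ≤ k) (hcov : lam ≤ (K.biUnion Sets).card) :
    ∃ C : Set (Sum (Fin m) (Fin n × Fin q)), C.ncard ≤ k ∧
      ((MCGraph m n q Sets).induce C).Connected ∧
      m + q * lam ≤ (closedNbhd (MCGraph m n q Sets) C).ncard := by
  classical
  set cov := K.biUnion Sets with hcovdef
  have hcovne : cov.Nonempty := Finset.card_pos.mp (lt_of_lt_of_le hl hcov)
  obtain ⟨x0, hx0⟩ := hcovne
  obtain ⟨j0, hj0K, _⟩ := Finset.mem_biUnion.mp hx0
  refine ⟨↑(K.image (Sum.inl : Fin m → Sum (Fin m) (Fin n × Fin q))), ?_, ?_, ?_⟩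
  · rw [Set.ncard_coe_finset]
    calc (K.image Sum.inl).card ≤ K.card := Finset.card_image_le
      _ ≤ k := hK
  · rw [SimpleGraph.connected_iff]
    constructor
    · rintro ⟨u, hu⟩ ⟨v, hv⟩
      simp only [Finset.coe_image, Set.mem_image, Finset.mem_coe] at hu hv
      obtain ⟨i, hiK, rfl⟩ := hu
      obtain ⟨j, hjK, rfl⟩ := hv
      by_cases hij : i = j
      · subst hij; rfl
      · exact SimpleGraph.Adj.reachable (by simpa [SimpleGraph.comap, MCGraph] using hij)
    · exact ⟨⟨Sum.inl j0, by simp [hj0K]⟩⟩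
  · have hsub : ↑((Finset.univ.image (Sum.inl : Fin m → _)) ∪
        ((cov ×ˢ (Finset.univ : Finset (Fin q))).image Sum.inr)) ⊆
        closedNbhd (MCGraph m n q Sets) ↑(K.image (Sum.inl : Fin m → Sum (Fin m) (Fin n × Fin q))) := by
      intro u hu
      simp only [Finset.coe_union, Set.mem_union, Finset.coe_image, Set.mem_image,
        Finset.mem_coe, Finset.mem_univ, Finset.mem_product] at hu
      rcases hu with ⟨i, _, rfl⟩ | ⟨⟨x, z⟩, hx, rfl⟩
      · by_cases hi : i = j0
        · exact ⟨Sum.inl j0, by simp [hj0K], Or.inl (by rw [hi])⟩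
        · exact ⟨Sum.inl j0, by simp [hj0K], Or.inr (by simpa [MCGraph] using Ne.symm hi)⟩
      · obtain ⟨i, hiK, hxi⟩ := Finset.mem_biUnion.mp hx.1
        exact ⟨Sum.inl i, by simp [hiK], Or.inr (by simpa [MCGraph] using hxi)⟩
    have hcard : ((Finset.univ.image (Sum.inl : Fin m → Sum (Fin m) (Fin n × Fin q))) ∪
        ((cov ×ˢ (Finset.univ : Finset (Fin q))).image Sum.inr)).card
        = m + cov.card * q := by
      rw [Finset.card_union_of_disjoint, Finset.card_image_of_injective _ Sum.inl_injective,
        Finset.card_image_of_injective _ Sum.inr_injective, Finset.card_univ,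
        Finset.card_product, Finset.card_univ]
      · simp
      rw [Finset.disjoint_left]
      rintro a ha hb
      simp only [Finset.mem_image] at ha hb
      obtain ⟨i, -, rfl⟩ := ha
      obtain ⟨x, -, h⟩ := hb
      exact absurd h (by simp)
    calc m + q * lam ≤ m + cov.card * q := by
          have : q * lam ≤ cov.card * q := by
            rw [mul_comm cov.card q]; exact Nat.mul_le_mul_left q hcov
          omega
      _ = _ := hcard.symm
      _ = _ := (Set.ncard_coe_finset _).symm
      _ ≤ _ := Set.ncard_le_ncard hsub (Set.toFinite _)
end

section
/- In the graph G of the BEVD gap reduction (root v_0 adjacent to s_1,…,s_m; q copies of each element x_j, each adjacent to the s_i with x_j ∈ S_i): for every edge set E' of size at most k, there is an edge set E'' of size at most k consisting only of edges of the form (v_0, s_i) with N[E'] ⊆ N[E'']. -/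
/-- The set of endpoints `V(E')` of a set of edges. -/
def endpoints {V : Type*} (E' : Set (Sym2 V)) : Set V :=
  {v | ∃ e ∈ E', v ∈ e}

/-- The graph of the BEVD gap reduction: a root `v₀` adjacent to set-vertices
`s_1, …, s_m`, and `q` copies of each of the `n` elements, with copy `x_{j,z}`
adjacent to `s_i` exactly when `x_j ∈ S_i`. -/
def BEVDGraph (m n q : ℕ) (Sets : Fin m → Finset (Fin n)) :
    SimpleGraph (Sum Unit (Sum (Fin m) (Fin n × Fin q))) where
  Adj a b := match a, b with
    | .inl _, .inr (.inl _) => True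
    | .inr (.inl _), .inl _ => True
    | .inr (.inl i), .inr (.inr x) => x.1 ∈ Sets i
    | .inr (.inr x), .inr (.inl i) => x.1 ∈ Sets i
    | _, _ => False
  symm := ⟨by rintro (u | i | x) (v | j | y) h <;> simp_all⟩
  loopless := ⟨by rintro (u | i | x) h <;> simp_all⟩

def rootify (m n q : ℕ) :
    Sym2 (Sum Unit (Sum (Fin m) (Fin n × Fin q))) →
    Sym2 (Sum Unit (Sum (Fin m) (Fin n × Fin q))) :=
  Sym2.lift ⟨fun a b => match a, b with
    | .inr (.inl _), .inr (.inl _) => s(Sum.inl (), Sum.inl ())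
    | .inr (.inl i), _ => s(Sum.inl (), Sum.inr (Sum.inl i))
    | _, .inr (.inl i) => s(Sum.inl (), Sum.inr (Sum.inl i))
    | _, _ => s(Sum.inl (), Sum.inl ()),
    by rintro (a|i|x) (b|j|y) <;> rfl⟩

/-- In the BEVD reduction graph, any edge set of size at most `k` can be replaced by an
edge set of size at most `k` consisting only of root edges `(v₀, s_i)` that dominates at
least as much. -/
theorem stmt_16 (m n q k : ℕ) (hm : 1 ≤ m) (hq : 1 ≤ q)
    (Sets : Fin m → Finset (Fin n)) :
    ∀ E' ⊆ (BEVDGraph m n q Sets).edgeSet, E'.ncard ≤ k →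
      ∃ E'' ⊆ (BEVDGraph m n q Sets).edgeSet, E''.ncard ≤ k ∧
        (∀ e ∈ E'', ∃ i : Fin m,
          e = s(Sum.inl (), Sum.inr (Sum.inl i))) ∧
        closedNbhd (BEVDGraph m n q Sets) (endpoints E')
          ⊆ closedNbhd (BEVDGraph m n q Sets) (endpoints E'') := by
  intro E' hE' hk
  set G := BEVDGraph m n q Sets with hG
  -- key fact: for each edge e ∈ E', rootify e is a root edge dominating N[e]
  have key : ∀ e ∈ E', ∃ i : Fin m,
      rootify m n q e = s(Sum.inl (), Sum.inr (Sum.inl i)) ∧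
      (∀ v ∈ e, ∀ u, (u = v ∨ G.Adj v u) →
        (u = (Sum.inl () : Sum Unit (Sum (Fin m) (Fin n × Fin q))) ∨
         G.Adj (Sum.inl ()) u ∨ u = Sum.inr (Sum.inl i) ∨ G.Adj (Sum.inr (Sum.inl i)) u)) := by
    intro e he
    have hedge := hE' he
    induction e using Sym2.ind with
    | _ a b =>
      rw [SimpleGraph.mem_edgeSet] at hedge
      rcases a with u | i | x <;> rcases b with v | j | y
      · exact absurd hedge (by simp [hG, BEVDGraph])
      · -- v0 -- s_j
        refine ⟨j, rfl, ?_⟩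
        rintro v hv u hu
        simp [Sym2.mem_iff] at hv
        rcases hv with rfl | rfl
        · rcases hu with rfl | hu
          · left; rfl
          · rcases u with u | l | x
            · simp [hG, BEVDGraph] at hu
            · right; left; simp [hG, BEVDGraph]
            · simp [hG, BEVDGraph] at hu
        · rcases hu with rfl | hu
          · right; right; left; rfl
          · right; right; right; exact hu
      · exact absurd hedge (by simp [hG, BEVDGraph])
      · -- s_i -- v0
        refine ⟨i, rfl, ?_⟩
        rintro v hv u hu
        simp [Sym2.mem_iff] at hv
        rcases hv with rfl | rfl
        · rcases hu with rfl | hu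
          · right; right; left; rfl
          · right; right; right; exact hu
        · rcases hu with rfl | hu
          · left; rfl
          · rcases u with u | l | x
            · simp [hG, BEVDGraph] at hu
            · right; left; simp [hG, BEVDGraph]
            · simp [hG, BEVDGraph] at hu
      · exact absurd hedge (by simp [hG, BEVDGraph])
      · -- s_i -- x_y
        refine ⟨i, rfl, ?_⟩
        rintro v hv u hu
        simp [Sym2.mem_iff] at hv
        rcases hv with rfl | rfl
        · rcases hu with rfl | hu
          · right; right; left; rfl
          · right; right; right; exact hu
        · rcases hu with rfl | hu
          · right; right; right; exact hedge
          · rcases u with u | l | x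
            · simp [hG, BEVDGraph] at hu
            · right; left; simp [hG, BEVDGraph]
            · simp [hG, BEVDGraph] at hu
      · exact absurd hedge (by simp [hG, BEVDGraph])
      · -- x_y -- s_j
        refine ⟨j, rfl, ?_⟩
        rintro v hv u hu
        simp [Sym2.mem_iff] at hv
        rcases hv with rfl | rfl
        · rcases hu with rfl | hu
          · right; right; right; exact hedge
          · rcases u with u | l | x
            · simp [hG, BEVDGraph] at hu
            · right; left; simp [hG, BEVDGraph]
            · simp [hG, BEVDGraph] at hu
        · rcases hu with rfl | hu
          · right; right; left; rfl
          · right; right; right; exact hu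
      · exact absurd hedge (by simp [hG, BEVDGraph])
  refine ⟨rootify m n q '' E', ?_, ?_, ?_, ?_⟩
  · rintro e ⟨e', he', rfl⟩
    obtain ⟨i, hi, -⟩ := key e' he'
    rw [hi, SimpleGraph.mem_edgeSet]
    simp [hG, BEVDGraph]
  · exact (Set.ncard_image_le E'.toFinite).trans hk
  · rintro e ⟨e', he', rfl⟩
    obtain ⟨i, hi, -⟩ := key e' he'
    exact ⟨i, hi⟩
  · rintro u ⟨v, ⟨e, he, hve⟩, hu⟩
    obtain ⟨i, hi, hdom⟩ := key e he
    rcases hdom v hve u hu with h | h | h | h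
    · exact ⟨Sum.inl (), ⟨_, ⟨e, he, hi⟩, Sym2.mem_mk_left _ _⟩, Or.inl h⟩
    · exact ⟨Sum.inl (), ⟨_, ⟨e, he, hi⟩, Sym2.mem_mk_left _ _⟩, Or.inr h⟩
    · exact ⟨Sum.inr (Sum.inl i), ⟨_, ⟨e, he, hi⟩, Sym2.mem_mk_right _ _⟩, Or.inl h⟩
    · exact ⟨Sum.inr (Sum.inl i), ⟨_, ⟨e, he, hi⟩, Sym2.mem_mk_right _ _⟩, Or.inr h⟩
end

section
/- In the BEVD gap-reduction graph, if some k sets cover at least λ elements, then there is a set of at most k edges dominating at least m + 1 + qλ vertices; conversely, if every k sets cover fewer than μ elements, then every set of at most k edges dominates fewer than m + 1 + qμ vertices. -/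
lemma bevd_edge {m n q : ℕ} {Sets : Fin m → Finset (Fin n)} {e}
    (he : e ∈ (BEVDGraph m n q Sets).edgeSet) :
    (∃ i, e = s(Sum.inl (), Sum.inr (Sum.inl i))) ∨
    (∃ i x, x.1 ∈ Sets i ∧ e = s(Sum.inr (Sum.inl i), Sum.inr (Sum.inr x))) := by
  induction e using Sym2.ind with
  | _ a b =>
    rw [SimpleGraph.mem_edgeSet] at he
    rcases a with _ | i | x <;> rcases b with _ | j | y <;>
      simp only [BEVDGraph] at he
    · exact .inl ⟨j, rfl⟩
    · exact .inl ⟨i, Sym2.eq_swap⟩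
    · exact .inr ⟨i, y, he, rfl⟩
    · exact .inr ⟨j, x, he, Sym2.eq_swap⟩

lemma bevd_uniq {m n q : ℕ} {Sets : Fin m → Finset (Fin n)} {e} {i i' : Fin m}
    (he : e ∈ (BEVDGraph m n q Sets).edgeSet)
    (h1 : Sum.inr (Sum.inl i) ∈ e) (h2 : Sum.inr (Sum.inl i') ∈ e) : i = i' := by
  rcases bevd_edge he with ⟨i₀, rfl⟩ | ⟨i₀, x, hx, rfl⟩ <;>
    simp_all [Sym2.mem_iff]

lemma bevd_card_S (m n q : ℕ) (D : Finset (Fin n)) :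
    (({Sum.inl ()} ∪ Finset.univ.image
        (fun i : Fin m => (Sum.inr (Sum.inl i) : Sum Unit (Sum (Fin m) (Fin n × Fin q)))) ∪
      (D ×ˢ (Finset.univ : Finset (Fin q))).image
        (fun p : Fin n × Fin q => Sum.inr (Sum.inr p))) : Finset _).card
      = 1 + m + D.card * q := by
  rw [Finset.card_union_of_disjoint, Finset.card_union_of_disjoint]
  · rw [Finset.card_singleton,
      Finset.card_image_of_injective _ (fun a b h => by simpa using h),
      Finset.card_image_of_injective _ (fun a b h => by simpa using h),
      Finset.card_univ, Finset.card_product, Finset.card_univ, Fintype.card_fin,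
      Fintype.card_fin]
  · simp [Finset.disjoint_left]
  · simp [Finset.disjoint_left]

/-- BEVD gap reduction: if some `k` sets cover at least `λ` elements, then at most `k`
edges dominate at least `m + 1 + qλ` vertices; conversely, if every `k` sets cover
fewer than `μ` elements, then every set of at most `k` edges dominates fewer than
`m + 1 + qμ` vertices. -/
theorem stmt_17 (m n q k lam mu : ℕ) (hm : 1 ≤ m) (hq : 1 ≤ q) (hk : 1 ≤ k)
    (hl : 1 ≤ lam) (Sets : Fin m → Finset (Fin n)) :
    ((∃ K : Finset (Fin m), K.card ≤ k ∧ lam ≤ (K.biUnion Sets).card) →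
      ∃ E' ⊆ (BEVDGraph m n q Sets).edgeSet, E'.ncard ≤ k ∧
        m + 1 + q * lam ≤ (closedNbhd (BEVDGraph m n q Sets) (endpoints E')).ncard) ∧
    ((∀ K : Finset (Fin m), K.card ≤ k → (K.biUnion Sets).card < mu) →
      ∀ E' ⊆ (BEVDGraph m n q Sets).edgeSet, E'.ncard ≤ k →
        (closedNbhd (BEVDGraph m n q Sets) (endpoints E')).ncard < m + 1 + q * mu) := by
  classical
  constructor
  · rintro ⟨K, hKk, hKl⟩
    have hKne : K.Nonempty := by
      rcases K.eq_empty_or_nonempty with rfl | h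
      · simp at hKl; omega
      · exact h
    obtain ⟨i₀, hi₀⟩ := hKne
    set E' : Set (Sym2 (Sum Unit (Sum (Fin m) (Fin n × Fin q)))) :=
      ↑(K.image (fun i => s((Sum.inl () : Sum Unit (Sum (Fin m) (Fin n × Fin q))),
        Sum.inr (Sum.inl i)))) with hE'
    have hroot : (Sum.inl () : Sum Unit (Sum (Fin m) (Fin n × Fin q))) ∈ endpoints E' := by
      exact ⟨s(Sum.inl (), Sum.inr (Sum.inl i₀)), by
        rw [hE']; exact Finset.mem_coe.2 (Finset.mem_image_of_mem _ hi₀), by simp⟩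
    have hsv : ∀ i ∈ K, (Sum.inr (Sum.inl i) : Sum Unit (Sum (Fin m) (Fin n × Fin q)))
        ∈ endpoints E' := fun i hi =>
      ⟨s(Sum.inl (), Sum.inr (Sum.inl i)), by
        rw [hE']; exact Finset.mem_coe.2 (Finset.mem_image_of_mem _ hi), by simp⟩
    refine ⟨E', ?_, ?_, ?_⟩
    · intro e he
      simp only [hE', Finset.coe_image, Set.mem_image, Finset.mem_coe] at he
      obtain ⟨i, _, rfl⟩ := he
      simp [SimpleGraph.mem_edgeSet, BEVDGraph]
    · rw [hE', Set.ncard_coe_finset]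
      exact (Finset.card_image_le).trans hKk
    · set T : Finset (Sum Unit (Sum (Fin m) (Fin n × Fin q))) :=
        {Sum.inl ()} ∪ Finset.univ.image (fun i : Fin m => Sum.inr (Sum.inl i)) ∪
        ((K.biUnion Sets) ×ˢ (Finset.univ : Finset (Fin q))).image
          (fun p => Sum.inr (Sum.inr p)) with hT
      have hsub : (T : Set _) ⊆ closedNbhd (BEVDGraph m n q Sets) (endpoints E') := by
        intro u hu
        simp only [hT, Finset.coe_union, Set.mem_union, Finset.coe_singleton,
          Set.mem_singleton_iff, Finset.coe_image, Set.mem_image, Finset.mem_coe,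
          Finset.mem_product, Finset.mem_biUnion] at hu
        rcases hu with (rfl | ⟨i, _, rfl⟩) | ⟨p, ⟨⟨i, hiK, hji⟩, -⟩, rfl⟩
        · exact ⟨_, hroot, Or.inl rfl⟩
        · exact ⟨_, hroot, Or.inr (by simp [BEVDGraph])⟩
        · exact ⟨_, hsv i hiK, Or.inr (by simpa [BEVDGraph] using hji)⟩
      calc m + 1 + q * lam ≤ 1 + m + (K.biUnion Sets).card * q := by
            have h1 : q * lam ≤ (K.biUnion Sets).card * q := by
              rw [Nat.mul_comm]; exact Nat.mul_le_mul_right q hKl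
            omega
        _ = (T : Set _).ncard := by
            rw [Set.ncard_coe_finset, hT, bevd_card_S]
        _ ≤ _ := Set.ncard_le_ncard hsub (Set.toFinite _)
  · intro hcov E' hE'sub hE'k
    have hmu : 0 < mu := lt_of_le_of_lt (Nat.zero_le _) (by simpa using hcov ∅ (by simp))
    have hfin : E'.Finite := Set.toFinite _
    set g : Sym2 (Sum Unit (Sum (Fin m) (Fin n × Fin q))) → Fin m :=
      fun e => if h : ∃ i, Sum.inr (Sum.inl i) ∈ e then h.choose else ⟨0, hm⟩ with hg
    have hgspec : ∀ e ∈ E', ∀ i : Fin m, Sum.inr (Sum.inl i) ∈ e → g e = i := by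
      intro e he i hi
      have hex : ∃ i : Fin m, Sum.inr (Sum.inl i) ∈ e := ⟨i, hi⟩
      rw [hg]; simp only [hex, dif_pos]
      exact bevd_uniq (hE'sub he) hex.choose_spec hi
    set K : Finset (Fin m) := hfin.toFinset.image g with hK
    have hKk : K.card ≤ k := by
      refine Finset.card_image_le.trans ?_
      rwa [Set.ncard_eq_toFinset_card E' hfin] at hE'k
    set D := K.biUnion Sets with hD
    set T : Finset (Sum Unit (Sum (Fin m) (Fin n × Fin q))) :=
      {Sum.inl ()} ∪ Finset.univ.image (fun i : Fin m => Sum.inr (Sum.inl i)) ∪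
      (D ×ˢ (Finset.univ : Finset (Fin q))).image (fun p => Sum.inr (Sum.inr p)) with hT
    have hsub : closedNbhd (BEVDGraph m n q Sets) (endpoints E') ⊆ (T : Set _) := by
      rintro (u | i | ⟨j, z⟩) hu
      · simp [hT]
      · simp [hT]
      · obtain ⟨v, ⟨e, he, hve⟩, huv⟩ := hu
        have : ∃ i ∈ K, j ∈ Sets i := by
          rcases huv with rfl | hadj
          · rcases bevd_edge (hE'sub he) with ⟨i₁, rfl⟩ | ⟨i₁, x, hx, rfl⟩
            · simp at hve
            · have hjx : (⟨j, z⟩ : Fin n × Fin q) = x := by simpa using hve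
              subst hjx
              refine ⟨i₁, ?_, hx⟩
              rw [hK]
              exact Finset.mem_image.2 ⟨_, hfin.mem_toFinset.2 he,
                hgspec _ he i₁ (by simp)⟩
          · rcases v with _ | i₁ | x
            · simp [BEVDGraph] at hadj
            · refine ⟨i₁, ?_, by simpa [BEVDGraph] using hadj⟩
              rw [hK]
              exact Finset.mem_image.2 ⟨_, hfin.mem_toFinset.2 he, hgspec _ he i₁ hve⟩
            · simp [BEVDGraph] at hadj
        obtain ⟨i, hiK, hji⟩ := this
        simp only [hT, Finset.mem_coe, Finset.mem_union, Finset.mem_image,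
          Finset.mem_product, Finset.mem_univ, and_true]
        exact Or.inr ⟨⟨j, z⟩, by simp [hD]; exact ⟨i, hiK, hji⟩, rfl⟩
    have hDmu : D.card < mu := hcov K hKk
    calc (closedNbhd (BEVDGraph m n q Sets) (endpoints E')).ncard
        ≤ (T : Set _).ncard := Set.ncard_le_ncard hsub (Set.toFinite _)
      _ = 1 + m + D.card * q := by rw [Set.ncard_coe_finset, hT, bevd_card_S]
      _ < m + 1 + q * mu := by
          have h2 : D.card * q < q * mu := by
            rw [Nat.mul_comm q mu]
            exact Nat.mul_lt_mul_of_lt_of_le hDmu le_rfl hq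
          omega
end
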